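/- Let D be a symmetric monoidal category and F : D → Cat a lax symmetric monoidal functor (with respect to cartesian product of categories). Then the Grothendieck construction D ∫ F carries a symmetric monoidal structure compatible with that of D; moreover, if D is a permutative category (strict monoidal product), then so is D ∫ F. -/

import Mathlib

open CategoryTheory MonoidalCategory

universe v u

set_option linter.unusedSectionVars false

namespace GrothMon

/-- the unique object of the unit category in `Cat` -/
def pt : (𝟙_ Cat.{v, u}) := ⟨⟨⟨⟩⟩⟩

lemma pt_uniq (p : (𝟙_ Cat.{v, u})) : p = pt := rfl

section
variable {C : Type*} [Category C] {D' : Type*} [Category D']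

lemma prod_eqToHom {x x' : C} {y y' : D'} (h1 : x = x') (h2 : y = y') :
    ((eqToHom h1, eqToHom h2) : ((x, y) : C × D') ⟶ (x', y')) =
      eqToHom (congrArg₂ Prod.mk h1 h2) := by
  subst h1; subst h2; rfl

end

variable {D : Type u} [Category.{v} D] [MonoidalCategory D] [SymmetricCategory D]
variable (G : D ⥤ Cat.{v, u}) [G.LaxBraided]

open Functor.LaxMonoidal Functor.LaxBraided

/-- the object part of the lax structure map -/
def mObj {a b : D} (x : G.obj a) (y : G.obj b) : G.obj (a ⊗ b) :=
  (μ G a b).toFunctor.obj (x, y)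

/-- the morphism part of the lax structure map -/
def mMap {a b : D} {x x' : G.obj a} {y y' : G.obj b} (φ : x ⟶ x') (ψ : y ⟶ y') :
    mObj G x y ⟶ mObj G x' y' :=
  (μ G a b).toFunctor.map (X := (x, y)) (Y := (x', y')) (φ, ψ)

variable {G}

lemma mMap_comp {a b : D} {x x' x'' : G.obj a} {y y' y'' : G.obj b}
    (φ : x ⟶ x') (φ' : x' ⟶ x'') (ψ : y ⟶ y') (ψ' : y' ⟶ y'') :
    mMap G (φ ≫ φ') (ψ ≫ ψ') = mMap G φ ψ ≫ mMap G φ' ψ' :=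
  (μ G a b).toFunctor.map_comp (X := (x, y)) (Y := (x', y')) (Z := (x'', y'')) (φ, ψ) (φ', ψ')

@[simp] lemma mMap_id {a b : D} (x : G.obj a) (y : G.obj b) :
    mMap G (𝟙 x) (𝟙 y) = 𝟙 (mObj G x y) :=
  (μ G a b).toFunctor.map_id (x, y)

@[simp] lemma mMap_eqToHom {a b : D} {x x' : G.obj a} {y y' : G.obj b}
    (h1 : x = x') (h2 : y = y') :
    mMap G (eqToHom h1) (eqToHom h2) = eqToHom (congrArg₂ (mObj G) h1 h2) := by
  rw [mMap, prod_eqToHom]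
  exact eqToHom_map _ _

@[simp] lemma mMap_eqToHom_comp_left {a b : D} {x₀ x x' : G.obj a} {y y' : G.obj b}
    (h : x₀ = x) (φ : x ⟶ x') (ψ : y ⟶ y') :
    mMap G (eqToHom h ≫ φ) ψ = eqToHom (by rw [h]) ≫ mMap G φ ψ := by
  conv_lhs => rw [show ψ = eqToHom rfl ≫ ψ by simp, mMap_comp, mMap_eqToHom]

@[simp] lemma mMap_eqToHom_comp_right {a b : D} {x x' : G.obj a} {y₀ y y' : G.obj b}
    (h : y₀ = y) (φ : x ⟶ x') (ψ : y ⟶ y') :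
    mMap G φ (eqToHom h ≫ ψ) = eqToHom (by rw [h]) ≫ mMap G φ ψ := by
  conv_lhs => rw [show φ = eqToHom rfl ≫ φ by simp, mMap_comp, mMap_eqToHom]

lemma mObj_natural {a a' b b' : D} (f : a ⟶ a') (g : b ⟶ b')
    (x : G.obj a) (y : G.obj b) :
    (G.map (f ⊗ₘ g)).toFunctor.obj (mObj G x y) =
      mObj G ((G.map f).toFunctor.obj x) ((G.map g).toFunctor.obj y) :=
  (Functor.congr_obj (congrArg Cat.Hom.toFunctor (μ_natural G f g)) (x, y)).symm

lemma mMap_natural {a a' b b' : D} (f : a ⟶ a') (g : b ⟶ b')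
    {x x' : G.obj a} {y y' : G.obj b} (φ : x ⟶ x') (ψ : y ⟶ y') :
    (G.map (f ⊗ₘ g)).toFunctor.map (mMap G φ ψ) =
      eqToHom (mObj_natural f g x y) ≫
        mMap G ((G.map f).toFunctor.map φ) ((G.map g).toFunctor.map ψ) ≫
          eqToHom (mObj_natural f g x' y').symm := by
  have := Functor.congr_hom (congrArg Cat.Hom.toFunctor (μ_natural G f g).symm)
    (X := (x, y)) (Y := (x', y')) (φ, ψ)
  exact this

lemma mObj_assoc {a b c : D} (x : G.obj a) (y : G.obj b) (z : G.obj c) :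
    (G.map (α_ a b c).hom).toFunctor.obj (mObj G (mObj G x y) z) =
      mObj G x (mObj G y z) :=
  Functor.congr_obj (congrArg Cat.Hom.toFunctor (associativity G a b c)) ((x, y), z)

lemma mMap_assoc {a b c : D} {x x' : G.obj a} {y y' : G.obj b} {z z' : G.obj c}
    (φ : x ⟶ x') (ψ : y ⟶ y') (χ : z ⟶ z') :
    (G.map (α_ a b c).hom).toFunctor.map (mMap G (mMap G φ ψ) χ) =
      eqToHom (mObj_assoc x y z) ≫ mMap G φ (mMap G ψ χ) ≫
        eqToHom (mObj_assoc x' y' z').symm :=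
  Functor.congr_hom (congrArg Cat.Hom.toFunctor (associativity G a b c))
    (X := ((x, y), z)) (Y := ((x', y'), z')) ((φ, ψ), χ)

/-- unit fiber object -/
def eObj : G.obj (𝟙_ D) := (ε G).toFunctor.obj pt

lemma mObj_lunit {a : D} (x : G.obj a) :
    (G.map (λ_ a).hom).toFunctor.obj (mObj G (eObj (G := G)) x) = x :=
  (Functor.congr_obj (congrArg Cat.Hom.toFunctor (left_unitality G a)) ((pt, x) : (𝟙_ Cat.{v,u} ⊗ G.obj a : Cat))).symm

lemma mMap_lunit {a : D} {x x' : G.obj a} (φ : x ⟶ x') :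
    (G.map (λ_ a).hom).toFunctor.map (mMap G (𝟙 (eObj (G := G))) φ) =
      eqToHom (mObj_lunit x) ≫ φ ≫ eqToHom (mObj_lunit x').symm := by
  have h := Functor.congr_hom (congrArg Cat.Hom.toFunctor (left_unitality G a).symm)
    (X := ((pt, x) : (𝟙_ Cat.{v,u} ⊗ G.obj a : Cat))) (Y := (pt, x')) (𝟙 pt, φ)
  rw [show mMap G (𝟙 (eObj (G := G))) φ =
    (μ G (𝟙_ D) a).toFunctor.map (X := (eObj, x)) (Y := (eObj, x')) ((ε G).toFunctor.map (𝟙 pt), φ) by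
      rw [(ε G).toFunctor.map_id]; rfl]
  exact h

lemma mObj_runit {a : D} (x : G.obj a) :
    (G.map (ρ_ a).hom).toFunctor.obj (mObj G x (eObj (G := G))) = x :=
  (Functor.congr_obj (congrArg Cat.Hom.toFunctor (right_unitality G a)) ((x, pt) : (G.obj a ⊗ 𝟙_ Cat.{v,u} : Cat))).symm

lemma mMap_runit {a : D} {x x' : G.obj a} (φ : x ⟶ x') :
    (G.map (ρ_ a).hom).toFunctor.map (mMap G φ (𝟙 (eObj (G := G)))) =
      eqToHom (mObj_runit x) ≫ φ ≫ eqToHom (mObj_runit x').symm := by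
  have h := Functor.congr_hom (congrArg Cat.Hom.toFunctor (right_unitality G a).symm)
    (X := ((x, pt) : (G.obj a ⊗ 𝟙_ Cat.{v,u} : Cat))) (Y := (x', pt)) (φ, 𝟙 pt)
  rw [show mMap G φ (𝟙 (eObj (G := G))) =
    (μ G a (𝟙_ D)).toFunctor.map (X := (x, eObj)) (Y := (x', eObj)) (φ, (ε G).toFunctor.map (𝟙 pt)) by
      rw [(ε G).toFunctor.map_id]; rfl]
  exact h

lemma mObj_braid {a b : D} (x : G.obj a) (y : G.obj b) :
    (G.map (β_ a b).hom).toFunctor.obj (mObj G x y) = mObj G y x :=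
  Functor.congr_obj (congrArg Cat.Hom.toFunctor (Functor.LaxBraided.braided (F := G) a b)) (x, y)

lemma mMap_braid {a b : D} {x x' : G.obj a} {y y' : G.obj b}
    (φ : x ⟶ x') (ψ : y ⟶ y') :
    (G.map (β_ a b).hom).toFunctor.map (mMap G φ ψ) =
      eqToHom (mObj_braid x y) ≫ mMap G ψ φ ≫ eqToHom (mObj_braid x' y').symm :=
  Functor.congr_hom (congrArg Cat.Hom.toFunctor (Functor.LaxBraided.braided (F := G) a b))
    (X := (x, y)) (Y := (x', y')) (φ, ψ)

end GrothMon

namespace GrothMon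

variable {D : Type u} [Category.{v} D] [MonoidalCategory D] [SymmetricCategory D]
variable (G : D ⥤ Cat.{v, u}) [G.LaxBraided]

open Functor.LaxMonoidal Functor.LaxBraided Grothendieck


variable {G}

/-- tensor product of objects -/
def tObj (X Y : Grothendieck G) : Grothendieck G :=
  ⟨X.base ⊗ Y.base, mObj G X.fiber Y.fiber⟩

@[simp] lemma tObj_base (X Y : Grothendieck G) : (tObj X Y).base = X.base ⊗ Y.base := rfl
@[simp] lemma tObj_fiber (X Y : Grothendieck G) :
    (tObj X Y).fiber = mObj G X.fiber Y.fiber := rfl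

/-- tensor product of morphisms -/
def tHom {X X' Y Y' : Grothendieck G} (f : X ⟶ X') (g : Y ⟶ Y') :
    tObj X Y ⟶ tObj X' Y' where
  base := f.base ⊗ₘ g.base
  fiber := eqToHom (mObj_natural f.base g.base X.fiber Y.fiber) ≫ mMap G f.fiber g.fiber

@[simp] lemma tHom_base {X X' Y Y' : Grothendieck G} (f : X ⟶ X') (g : Y ⟶ Y') :
    (tHom f g).base = f.base ⊗ₘ g.base := rfl
@[simp] lemma tHom_fiber {X X' Y Y' : Grothendieck G} (f : X ⟶ X') (g : Y ⟶ Y') :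
    (tHom f g).fiber
      = eqToHom (mObj_natural f.base g.base X.fiber Y.fiber) ≫ mMap G f.fiber g.fiber := rfl

variable (G)

/-- the unit object -/
def gUnit : Grothendieck G := ⟨𝟙_ D, eObj⟩

attribute [reducible] tObj gUnit tHom

variable {G}

/-- inverse fiber equality -/
lemma gIsoInvEq {X Y : Grothendieck G} (e : X.base ≅ Y.base)
    (h : (G.map e.hom).toFunctor.obj X.fiber = Y.fiber) :
    (G.map e.inv).toFunctor.obj Y.fiber = X.fiber := by
  rw [← h]
  exact Functor.congr_obj (congrArg Cat.Hom.toFunctor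
    (show G.map e.hom ≫ G.map e.inv = 𝟙 _ by rw [← G.map_comp, e.hom_inv_id, G.map_id]))
    X.fiber

/-- isomorphisms with `eqToHom` fibers -/
@[reducible] def gIso {X Y : Grothendieck G} (e : X.base ≅ Y.base)
    (h : (G.map e.hom).toFunctor.obj X.fiber = Y.fiber) : X ≅ Y where
  hom := ⟨e.hom, eqToHom h⟩
  inv := ⟨e.inv, eqToHom (gIsoInvEq e h)⟩
  hom_inv_id := Grothendieck.ext _ _ (by simp) (by
    simp [Grothendieck.comp_fiber, Grothendieck.id_fiber, eqToHom_map, -Grothendieck.id_base, -Grothendieck.comp_base])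
  inv_hom_id := Grothendieck.ext _ _ (by simp) (by
    simp [Grothendieck.comp_fiber, Grothendieck.id_fiber, eqToHom_map, -Grothendieck.id_base, -Grothendieck.comp_base])

@[simp] lemma gIso_hom_base {X Y : Grothendieck G} (e : X.base ≅ Y.base)
    (h : (G.map e.hom).toFunctor.obj X.fiber = Y.fiber) : (gIso e h).hom.base = e.hom := rfl
@[simp] lemma gIso_hom_fiber {X Y : Grothendieck G} (e : X.base ≅ Y.base)
    (h : (G.map e.hom).toFunctor.obj X.fiber = Y.fiber) : (gIso e h).hom.fiber = eqToHom h := rfl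
@[simp] lemma gIso_inv_base {X Y : Grothendieck G} (e : X.base ≅ Y.base)
    (h : (G.map e.hom).toFunctor.obj X.fiber = Y.fiber) : (gIso e h).inv.base = e.inv := rfl
@[simp] lemma gIso_inv_fiber {X Y : Grothendieck G} (e : X.base ≅ Y.base)
    (h : (G.map e.hom).toFunctor.obj X.fiber = Y.fiber) :
    (gIso e h).inv.fiber = eqToHom (gIsoInvEq e h) := rfl

@[simp] lemma mMap_eqToHom_left {a b : D} {x₀ x : G.obj a} {y y' : G.obj b}
    (h : x₀ = x) (ψ : y ⟶ y') :
    mMap G (eqToHom h) ψ = eqToHom (by rw [h]) ≫ mMap G (𝟙 x) ψ := by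
  subst h; simp

@[simp] lemma mMap_eqToHom_right {a b : D} {x x' : G.obj a} {y₀ y : G.obj b}
    (φ : x ⟶ x') (h : y₀ = y) :
    mMap G φ (eqToHom h) = eqToHom (by rw [h]) ≫ mMap G φ (𝟙 y) := by
  subst h; simp

@[simp] lemma gUnit_base : (gUnit G).base = 𝟙_ D := rfl
@[simp] lemma gUnit_fiber : (gUnit G).fiber = eObj := rfl

variable (G)

instance grothMonStruct : MonoidalCategoryStruct (Grothendieck G) where
  tensorObj := tObj
  tensorHom := tHom
  whiskerLeft X _ _ g := tHom (𝟙 X) g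
  whiskerRight f Y := tHom f (𝟙 Y)
  tensorUnit := gUnit G
  associator X Y Z := gIso (α_ X.base Y.base Z.base) (mObj_assoc X.fiber Y.fiber Z.fiber)
  leftUnitor X := gIso (λ_ X.base) (mObj_lunit X.fiber)
  rightUnitor X := gIso (ρ_ X.base) (mObj_runit X.fiber)

variable {G}

@[simp] lemma tensorHom_eq {X X' Y Y' : Grothendieck G} (f : X ⟶ X') (g : Y ⟶ Y') :
    f ⊗ₘ g = tHom f g := rfl
@[simp] lemma whiskerLeft_eq (X : Grothendieck G) {Y Y' : Grothendieck G} (g : Y ⟶ Y') :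
    X ◁ g = tHom (𝟙 X) g := rfl
@[simp] lemma whiskerRight_eq {X X' : Grothendieck G} (f : X ⟶ X') (Y : Grothendieck G) :
    f ▷ Y = tHom f (𝟙 Y) := rfl
@[simp] lemma tensorObj_eq (X Y : Grothendieck G) : X ⊗ Y = tObj X Y := rfl
lemma tensorUnit_eq : 𝟙_ (Grothendieck G) = gUnit G := rfl
@[simp] lemma associator_eq (X Y Z : Grothendieck G) :
    α_ X Y Z = gIso (α_ X.base Y.base Z.base) (mObj_assoc X.fiber Y.fiber Z.fiber) := rfl
@[simp] lemma leftUnitor_eq (X : Grothendieck G) :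
    λ_ X = gIso (λ_ X.base) (mObj_lunit X.fiber) := rfl
@[simp] lemma rightUnitor_eq (X : Grothendieck G) :
    ρ_ X = gIso (ρ_ X.base) (mObj_runit X.fiber) := rfl

lemma mMap_mMap {a b : D} {x x' x'' : G.obj a} {y y' y'' : G.obj b}
    (φ : x ⟶ x') (ψ : y ⟶ y') (φ' : x' ⟶ x'') (ψ' : y' ⟶ y'') :
    mMap G φ ψ ≫ mMap G φ' ψ' = mMap G (φ ≫ φ') (ψ ≫ ψ') := (mMap_comp _ _ _ _).symm

attribute [local simp] mMap_mMap

attribute [local simp] Grothendieck.comp_fiber Grothendieck.comp_base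
  Grothendieck.id_fiber Grothendieck.id_base eqToHom_map
  mMap_natural mMap_assoc mMap_lunit mMap_runit mMap_braid
  mMap_eqToHom_comp_left mMap_eqToHom_comp_right

lemma tensor_id' (X Y : Grothendieck G) : tHom (𝟙 X) (𝟙 Y) = 𝟙 (tObj X Y) :=
  Grothendieck.ext _ _ (by simp) (by simp [-Grothendieck.id_base, -Grothendieck.comp_base])

lemma tensor_comp' {X₁ Y₁ Z₁ X₂ Y₂ Z₂ : Grothendieck G}
    (f₁ : X₁ ⟶ Y₁) (f₂ : X₂ ⟶ Y₂) (g₁ : Y₁ ⟶ Z₁) (g₂ : Y₂ ⟶ Z₂) :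
    tHom (f₁ ≫ g₁) (f₂ ≫ g₂) = tHom f₁ f₂ ≫ tHom g₁ g₂ :=
  Grothendieck.ext _ _ (by simp [tensorHom_comp_tensorHom]) (by simp [-Grothendieck.id_base, -Grothendieck.comp_base])

lemma assoc_nat' {X₁ X₂ X₃ Y₁ Y₂ Y₃ : Grothendieck G}
    (f₁ : X₁ ⟶ Y₁) (f₂ : X₂ ⟶ Y₂) (f₃ : X₃ ⟶ Y₃) :
    tHom (tHom f₁ f₂) f₃ ≫ (α_ Y₁ Y₂ Y₃).hom = (α_ X₁ X₂ X₃).hom ≫ tHom f₁ (tHom f₂ f₃) :=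
  Grothendieck.ext _ _ (by simp [associator_naturality]) (by simp [-Grothendieck.id_base, -Grothendieck.comp_base])

lemma lunit_nat' {X Y : Grothendieck G} (f : X ⟶ Y) :
    tHom (𝟙 (gUnit G)) f ≫ (λ_ Y).hom = (λ_ X).hom ≫ f :=
  Grothendieck.ext _ _ (by simp) (by simp [-Grothendieck.id_base, -Grothendieck.comp_base])

lemma runit_nat' {X Y : Grothendieck G} (f : X ⟶ Y) :
    tHom f (𝟙 (gUnit G)) ≫ (ρ_ Y).hom = (ρ_ X).hom ≫ f :=
  Grothendieck.ext _ _ (by simp) (by simp [-Grothendieck.id_base, -Grothendieck.comp_base])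

lemma pentagon' (W X Y Z : Grothendieck G) :
    tHom (α_ W X Y).hom (𝟙 Z) ≫ (α_ W (tObj X Y) Z).hom ≫ tHom (𝟙 W) (α_ X Y Z).hom =
      (α_ (tObj W X) Y Z).hom ≫ (α_ W X (tObj Y Z)).hom :=
  Grothendieck.ext _ _ (by simp [MonoidalCategory.pentagon]) (by simp [-Grothendieck.id_base, -Grothendieck.comp_base])

lemma triangle' (X Y : Grothendieck G) :
    (α_ X (gUnit G) Y).hom ≫ tHom (𝟙 X) (λ_ Y).hom = tHom (ρ_ X).hom (𝟙 Y) :=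
  Grothendieck.ext _ _ (by simp [MonoidalCategory.triangle]) (by simp [-Grothendieck.id_base, -Grothendieck.comp_base])

lemma braid_nat_right' (X : Grothendieck G) {Y Z : Grothendieck G} (f : Y ⟶ Z) :
    tHom (𝟙 X) f ≫ (gIso (β_ X.base Z.base) (mObj_braid X.fiber Z.fiber)).hom =
      (gIso (β_ X.base Y.base) (mObj_braid X.fiber Y.fiber)).hom ≫ tHom f (𝟙 X) :=
  Grothendieck.ext _ _ (by simp) (by simp [-Grothendieck.id_base, -Grothendieck.comp_base])

lemma braid_nat_left' {X Y : Grothendieck G} (f : X ⟶ Y) (Z : Grothendieck G) :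
    tHom f (𝟙 Z) ≫ (gIso (β_ Y.base Z.base) (mObj_braid Y.fiber Z.fiber)).hom =
      (gIso (β_ X.base Z.base) (mObj_braid X.fiber Z.fiber)).hom ≫ tHom (𝟙 Z) f :=
  Grothendieck.ext _ _ (by simp) (by simp [-Grothendieck.id_base, -Grothendieck.comp_base])

lemma hexagon_fwd' (X Y Z : Grothendieck G) :
    (α_ X Y Z).hom ≫
        (gIso (β_ X.base (Y.base ⊗ Z.base)) (mObj_braid X.fiber (mObj G Y.fiber Z.fiber))).hom ≫
        (α_ Y Z X).hom =
      tHom (gIso (β_ X.base Y.base) (mObj_braid X.fiber Y.fiber)).hom (𝟙 Z) ≫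
        (α_ Y X Z).hom ≫
        tHom (𝟙 Y) (gIso (β_ X.base Z.base) (mObj_braid X.fiber Z.fiber)).hom :=
  Grothendieck.ext _ _ (by simp [BraidedCategory.hexagon_forward]) (by simp [-Grothendieck.id_base, -Grothendieck.comp_base])

lemma hexagon_rev' (X Y Z : Grothendieck G) :
    (α_ X Y Z).inv ≫
        (gIso (β_ (X.base ⊗ Y.base) Z.base) (mObj_braid (mObj G X.fiber Y.fiber) Z.fiber)).hom ≫
        (α_ Z X Y).inv =
      tHom (𝟙 X) (gIso (β_ Y.base Z.base) (mObj_braid Y.fiber Z.fiber)).hom ≫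
        (α_ X Z Y).inv ≫
        tHom (gIso (β_ X.base Z.base) (mObj_braid X.fiber Z.fiber)).hom (𝟙 Y) :=
  Grothendieck.ext _ _ (by simp [BraidedCategory.hexagon_reverse]) (by simp [-Grothendieck.id_base, -Grothendieck.comp_base])

lemma symmetry' (X Y : Grothendieck G) :
    (gIso (β_ X.base Y.base) (mObj_braid X.fiber Y.fiber)).hom ≫
      (gIso (X := tObj Y X) (Y := tObj X Y) (β_ Y.base X.base)
        (mObj_braid Y.fiber X.fiber)).hom = 𝟙 (tObj X Y) :=
  Grothendieck.ext _ _ (by simp) (by simp [-Grothendieck.id_base, -Grothendieck.comp_base])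

variable (G)

instance grothMonoidal : MonoidalCategory (Grothendieck G) :=
  MonoidalCategory.ofTensorHom
    (id_tensorHom_id := tensor_id')
    (id_tensorHom := fun X {Y₁ Y₂} f => rfl)
    (tensorHom_id := fun {X₁ X₂} f Y => rfl)
    (tensorHom_comp_tensorHom := fun f₁ f₂ g₁ g₂ => (tensor_comp' f₁ f₂ g₁ g₂).symm)
    (associator_naturality := assoc_nat')
    (leftUnitor_naturality := lunit_nat')
    (rightUnitor_naturality := runit_nat')
    (pentagon := pentagon')
    (triangle := triangle')

instance grothBraided : BraidedCategory (Grothendieck G) where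
  braiding X Y := gIso (β_ X.base Y.base) (mObj_braid X.fiber Y.fiber)
  braiding_naturality_right := braid_nat_right'
  braiding_naturality_left := braid_nat_left'
  hexagon_forward := hexagon_fwd'
  hexagon_reverse := hexagon_rev' 

variable {G}

@[simp] lemma braiding_eq (X Y : Grothendieck G) :
    β_ X Y = gIso (β_ X.base Y.base) (mObj_braid X.fiber Y.fiber) := rfl

variable (G)

instance grothSymmetric : SymmetricCategory (Grothendieck G) where
  toBraidedCategory := grothBraided G
  symmetry := symmetry' 

variable {G}

/-- objects of the Grothendieck construction are equal if base and fiber match -/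
lemma obj_ext' {X Y : Grothendieck G} (hb : X.base = Y.base)
    (hf : (G.map (eqToHom hb)).toFunctor.obj X.fiber = Y.fiber) : X = Y := by
  obtain ⟨a, x⟩ := X
  obtain ⟨b, y⟩ := Y
  dsimp at hb
  subst hb
  simp only [eqToHom_refl] at hf
  have : x = y := by
    rw [← hf]
    exact (Functor.congr_obj (congrArg Cat.Hom.toFunctor (G.map_id a)) x).symm
  subst this
  rfl

/-- a morphism with `eqToHom` base and fiber is an `eqToHom` -/
lemma hom_eq_eqToHom {X Y : Grothendieck G} (f : X ⟶ Y) (hb : X.base = Y.base)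
    (hbe : f.base = eqToHom hb) (hf : (G.map f.base).toFunctor.obj X.fiber = Y.fiber)
    (hfe : f.fiber = eqToHom hf) : ∃ h : X = Y, f = eqToHom h := by
  have hf' : (G.map (eqToHom hb)).toFunctor.obj X.fiber = Y.fiber := by rw [← hbe]; exact hf
  refine ⟨obj_ext' hb hf', ?_⟩
  have h := obj_ext' hb hf'
  subst h
  apply Grothendieck.ext _ _ (by rw [hbe]; simp)
  rw [hfe]
  simp
  exact eqToHom_trans _ _

end GrothMon

open GrothMon

noncomputable section

/-- A monoidal structure (taken as an instance) is permutative (strict) if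
the associator and the unitors are identities. -/
def IsPermutative (E : Type u) [Category.{v} E] [MonoidalCategory E] : Prop :=
  (∀ X : E, ∃ h : 𝟙_ E ⊗ X = X, (λ_ X).hom = eqToHom h) ∧
  (∀ X : E, ∃ h : X ⊗ 𝟙_ E = X, (ρ_ X).hom = eqToHom h) ∧
  (∀ X Y Z : E, ∃ h : (X ⊗ Y) ⊗ Z = X ⊗ (Y ⊗ Z), (α_ X Y Z).hom = eqToHom h)

/-- Let `D` be a symmetric monoidal category and `F : D ⥤ Cat` a lax symmetric
(braided) monoidal functor, with respect to the cartesian monoidal structure on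
`Cat`.  Then the Grothendieck construction `D ∫ F` carries a symmetric monoidal
structure compatible with that of `D` (the projection to `D` preserves the
tensor product and unit); moreover, if `D` is a permutative category (strict
monoidal product), then so is `D ∫ F`. -/
theorem stmt8 {D : Type u} [Category.{v} D] [MonoidalCategory D] [SymmetricCategory D]
    (F : LaxBraidedFunctor D Cat.{v, u}) :
    ∃ (M : MonoidalCategory (Grothendieck F.toFunctor))
      (_ : @SymmetricCategory (Grothendieck F.toFunctor) _ M),
      (∀ X Y : Grothendieck F.toFunctor,
        (@MonoidalCategoryStruct.tensorObj _ _ M.toMonoidalCategoryStruct X Y).base =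
          X.base ⊗ Y.base) ∧
      ((@MonoidalCategoryStruct.tensorUnit _ _ M.toMonoidalCategoryStruct).base = 𝟙_ D) ∧
      (IsPermutative D → @IsPermutative (Grothendieck F.toFunctor) _ M) := by
  refine ⟨grothMonoidal F.toFunctor, grothSymmetric F.toFunctor, fun X Y => rfl, rfl, ?_⟩
  rintro ⟨hl, hr, ha⟩
  refine ⟨fun X => ?_, fun X => ?_, fun X Y Z => ?_⟩
  · obtain ⟨h, he⟩ := hl X.base
    exact hom_eq_eqToHom (λ_ X).hom h he (mObj_lunit X.fiber) rfl
  · obtain ⟨h, he⟩ := hr X.base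
    exact hom_eq_eqToHom (ρ_ X).hom h he (mObj_runit X.fiber) rfl
  · obtain ⟨h, he⟩ := ha X.base Y.base Z.base
    exact hom_eq_eqToHom (α_ X Y Z).hom h he (mObj_assoc X.fiber Y.fiber Z.fiber) rfl

end
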